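/- The space X_crs is Hausdorff. -/

import Mathlib

open Set Topology Filter

noncomputable section

/-- The closed unit disk. -/
def D : Type := {z : ℂ // ‖z‖ ≤ 1}

instance : TopologicalSpace D := instTopologicalSpaceSubtype

/-- The wedge point on each disk. -/
def basept : D := ⟨1, by norm_num⟩

/-- The outer point (outer 0-cell) on each disk. -/
def outerpt : D := ⟨-1, by norm_num⟩

/-- Wedge relation: glue all copies of the base point together. -/
def wsetoid : Setoid (ℕ × D) where
  r p q := p = q ∨ (p.2 = basept ∧ q.2 = basept)
  iseqv := by
    constructor
    · intro p; exact Or.inl rfl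
    · rintro p q (rfl | ⟨h1, h2⟩)
      · exact Or.inl rfl
      · exact Or.inr ⟨h2, h1⟩
    · rintro p q r (rfl | ⟨h1, h2⟩) (rfl | ⟨h3, h4⟩)
      · exact Or.inl rfl
      · exact Or.inr ⟨h3, h4⟩
      · exact Or.inr ⟨h1, h2⟩
      · exact Or.inr ⟨h1, h4⟩

/-- The wedge of countably many closed 2-disks, with the weak (CW) topology. -/
def X : Type := Quotient wsetoid

instance : TopologicalSpace X := instTopologicalSpaceQuotient

/-- The point of the `n`-th disk with disk-coordinate `z`. -/
def pt (n : ℕ) (z : D) : X := Quotient.mk wsetoid (n, z)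

/-- The origin (the wedge point `x`). -/
def origin : X := pt 0 basept

/-- The outer 0-cell `e_n^0` of the `n`-th disk. -/
def outer (n : ℕ) : X := pt n outerpt

/-- The `n`-th closed 2-cell `C_n`. -/
def cell (n : ℕ) : Set X := Set.range (pt n)

/-- The open sets of the coarser topology `τ`: CW-open sets which either do not
contain the origin, or contain all but finitely many punctured cells `C_n \ {e_n^0}`. -/
def crsOpen (U : Set X) : Prop :=
  IsOpen U ∧ (origin ∉ U ∨ {n : ℕ | ¬ (cell n \ {outer n} ⊆ U)}.Finite)

/-- The coarser topology `τ` on the wedge of disks. -/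
def crsTop : TopologicalSpace X where
  IsOpen := crsOpen
  isOpen_univ := ⟨isOpen_univ, Or.inr (Set.Finite.subset Set.finite_empty
    (fun _ hn => absurd (Set.subset_univ _) hn))⟩
  isOpen_inter := by
    rintro U V ⟨hU, hU2⟩ ⟨hV, hV2⟩
    refine ⟨hU.inter hV, ?_⟩
    by_cases hx : origin ∈ U ∩ V
    · have h1 := hU2.resolve_left (fun h => h hx.1)
      have h2 := hV2.resolve_left (fun h => h hx.2)
      refine Or.inr ((h1.union h2).subset ?_)
      intro n hn
      by_contra hc
      simp only [Set.mem_union, Set.mem_setOf_eq, not_or, not_not] at hc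
      exact hn (Set.subset_inter hc.1 hc.2)
    · exact Or.inl hx
  isOpen_sUnion := by
    intro S hS
    refine ⟨isOpen_sUnion fun U hU => (hS U hU).1, ?_⟩
    by_cases hx : origin ∈ ⋃₀ S
    · obtain ⟨U, hUS, hxU⟩ := hx
      have h1 := (hS U hUS).2.resolve_left (fun h => h hxU)
      refine Or.inr (h1.subset ?_)
      intro n hn hsub
      exact hn (hsub.trans (Set.subset_sUnion_of_mem hUS))
    · exact Or.inl hx

namespace CrsProof

lemma pt_eq_iff {n m : ℕ} {z w : D} :
    pt n z = pt m w ↔ (n = m ∧ z = w) ∨ (z = basept ∧ w = basept) := by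
  constructor
  · intro h
    rcases Quotient.exact h with h' | h'
    · exact Or.inl ⟨congrArg Prod.fst h', congrArg Prod.snd h'⟩
    · exact Or.inr h'
  · rintro (⟨rfl, rfl⟩ | ⟨hz, hw⟩)
    · rfl
    · exact Quotient.sound (Or.inr ⟨hz, hw⟩)

lemma isOpen_X_iff {U : Set X} : IsOpen U ↔ IsOpen (Quotient.mk wsetoid ⁻¹' U) :=
  ⟨fun h => h.preimage continuous_quotient_mk', fun h => h⟩

lemma preimage_pt_image (n : ℕ) (A : Set D) (hA : basept ∉ A) :
    Quotient.mk wsetoid ⁻¹' (pt n '' A) = {n} ×ˢ A := by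
  ext ⟨m, w⟩
  simp only [Set.mem_preimage, Set.mem_image, Set.mem_prod, Set.mem_singleton_iff]
  constructor
  · rintro ⟨a, ha, h⟩
    rcases pt_eq_iff.mp h with ⟨h1, h2⟩ | ⟨h1, h2⟩
    · exact ⟨h1.symm, h2 ▸ ha⟩
    · exact absurd (h1 ▸ ha) hA
  · rintro ⟨rfl, hw⟩
    exact ⟨w, hw, rfl⟩

lemma isOpen_pt_image {n : ℕ} {A : Set D} (hA : IsOpen A) (hb : basept ∉ A) :
    IsOpen (pt n '' A) := by
  rw [isOpen_X_iff]
  exact Eq.mpr (congrArg IsOpen (preimage_pt_image n A hb)) ((isOpen_discrete _).prod hA)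

lemma isClosed_pt_image {n : ℕ} {K : Set D} (hK : IsClosed K) (hb : basept ∉ K) :
    IsClosed (pt n '' K) := by
  rw [← isOpen_compl_iff, isOpen_X_iff]
  exact Eq.mpr (congrArg IsOpen ((Set.preimage_compl (f := Quotient.mk wsetoid)
    (s := pt n '' K)).trans (congrArg (·ᶜ) (preimage_pt_image n K hb))))
    (isClosed_singleton.prod hK).isOpen_compl

lemma origin_not_mem {n : ℕ} {A : Set D} (hb : basept ∉ A) : origin ∉ pt n '' A := by
  rintro ⟨a, ha, h⟩
  rcases pt_eq_iff.mp h.symm with ⟨_, h2⟩ | ⟨_, h2⟩ <;> exact hb (h2 ▸ ha)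

lemma crsOpen_pt_image {n : ℕ} {A : Set D} (hA : IsOpen A) (hb : basept ∉ A) :
    crsOpen (pt n '' A) :=
  ⟨isOpen_pt_image hA hb, Or.inl (origin_not_mem hb)⟩

lemma crsOpen_compl {n : ℕ} {K : Set D} (hK : IsClosed K) (hb : basept ∉ K) :
    crsOpen (pt n '' K)ᶜ := by
  refine ⟨(isClosed_pt_image hK hb).isOpen_compl, Or.inr ?_⟩
  refine Set.Finite.subset (Set.finite_singleton n) ?_
  intro m hm
  simp only [Set.mem_setOf_eq] at hm
  by_contra hmn
  apply hm
  rintro x ⟨⟨w, rfl⟩, -⟩ ⟨k, hk, h⟩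
  rcases pt_eq_iff.mp h with ⟨h1, _⟩ | ⟨h1, h2⟩
  · exact hmn (Set.mem_singleton_iff.mpr h1.symm)
  · exact hb (h1 ▸ hk)

/-- ball in D -/
def bl (c : ℂ) (r : ℝ) : Set D := (fun z : D => z.val) ⁻¹' Metric.ball c r
def cbl (c : ℂ) (r : ℝ) : Set D := (fun z : D => z.val) ⁻¹' Metric.closedBall c r

lemma isOpen_bl (c r) : IsOpen (bl c r) := Metric.isOpen_ball.preimage continuous_subtype_val
lemma isClosed_cbl (c r) : IsClosed (cbl c r) :=
  Metric.isClosed_closedBall.preimage continuous_subtype_val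

lemma mem_bl {z : D} {c r} : z ∈ bl c r ↔ dist z.val c < r := Iff.rfl
lemma mem_cbl {z : D} {c r} : z ∈ cbl c r ↔ dist z.val c ≤ r := Iff.rfl

end CrsProof
namespace CrsProof

lemma basept_not_mem {n m : ℕ} {K : Set D} (hb : basept ∉ K) :
    pt n basept ∉ pt m '' K := by
  rintro ⟨k, hk, h⟩
  rcases pt_eq_iff.mp h with ⟨_, h2⟩ | ⟨h1, _⟩
  · exact hb (h2 ▸ hk)
  · exact hb (h1 ▸ hk)

lemma basept_val : (basept.val : ℂ) = 1 := rfl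

lemma basept_not_mem_bl {c : ℂ} {r : ℝ} (h : r ≤ ‖c - 1‖) : basept ∉ bl c r := by
  rw [mem_bl, basept_val, dist_comm, Complex.dist_eq]
  exact fun hc => absurd (lt_of_lt_of_le hc h) (lt_irrefl _)

lemma basept_not_mem_cbl {c : ℂ} {r : ℝ} (h : r < ‖c - 1‖) : basept ∉ cbl c r := by
  rw [mem_cbl, basept_val, dist_comm, Complex.dist_eq]
  exact fun hc => absurd (lt_of_le_of_lt hc h) (lt_irrefl _)

lemma bl_subset_cbl (c : ℂ) (r : ℝ) : bl c r ⊆ cbl c r := fun _ ha => mem_cbl.mpr (le_of_lt (mem_bl.mp ha))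

theorem crs_hausdorff' : @T2Space X crsTop := by
  refine @T2Space.mk X crsTop fun p q hpq => ?_
  obtain ⟨⟨n, z⟩, rfl⟩ := Quotient.exists_rep p
  obtain ⟨⟨m, w⟩, rfl⟩ := Quotient.exists_rep q
  have hpq' : pt n z ≠ pt m w := hpq
  by_cases hz : z = basept <;> by_cases hw : w = basept
  · exact absurd (pt_eq_iff.mpr (Or.inr ⟨hz, hw⟩)) hpq'
  · -- p is origin, q = pt m w with w ≠ basept
    subst hz
    have hr : (0:ℝ) < ‖w.val - 1‖ := by
      rw [norm_pos_iff, sub_ne_zero]; exact fun hc => hw (Subtype.ext hc)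
    set r := ‖w.val - 1‖ with hrdef
    have hbA : basept ∉ bl w.val (r/2) := basept_not_mem_bl (by linarith)
    have hbK : basept ∉ cbl w.val (r/2) := basept_not_mem_cbl (by linarith)
    refine ⟨(pt m '' cbl w.val (r/2))ᶜ, pt m '' bl w.val (r/2),
      crsOpen_compl (isClosed_cbl _ _) hbK, crsOpen_pt_image (isOpen_bl _ _) hbA,
      basept_not_mem hbK, ⟨w, by simp [mem_bl]; positivity, rfl⟩, ?_⟩
    refine Set.disjoint_left.mpr fun x hx hx2 => hx ?_
    exact Set.image_mono (bl_subset_cbl _ _) hx2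
  · -- q is origin
    subst hw
    have hr : (0:ℝ) < ‖z.val - 1‖ := by
      rw [norm_pos_iff, sub_ne_zero]; exact fun hc => hz (Subtype.ext hc)
    set r := ‖z.val - 1‖ with hrdef
    have hbA : basept ∉ bl z.val (r/2) := basept_not_mem_bl (by linarith)
    have hbK : basept ∉ cbl z.val (r/2) := basept_not_mem_cbl (by linarith)
    refine ⟨pt n '' bl z.val (r/2), (pt n '' cbl z.val (r/2))ᶜ,
      crsOpen_pt_image (isOpen_bl _ _) hbA, crsOpen_compl (isClosed_cbl _ _) hbK,
      ⟨z, by simp [mem_bl]; positivity, rfl⟩, basept_not_mem hbK, ?_⟩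
    refine Set.disjoint_right.mpr fun x hx hx2 => hx ?_
    exact Set.image_mono (bl_subset_cbl _ _) hx2
  · -- both non-basept
    have hrz : (0:ℝ) < ‖z.val - 1‖ := by
      rw [norm_pos_iff, sub_ne_zero]; exact fun hc => hz (Subtype.ext hc)
    have hrw : (0:ℝ) < ‖w.val - 1‖ := by
      rw [norm_pos_iff, sub_ne_zero]; exact fun hc => hw (Subtype.ext hc)
    by_cases hnm : n = m
    · subst hnm
      have hzw : z ≠ w := fun hc => hpq' (pt_eq_iff.mpr (Or.inl ⟨rfl, hc⟩))
      have hd : (0:ℝ) < dist z.val w.val := by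
        rw [dist_pos]; exact fun hc => hzw (Subtype.ext hc)
      set d := dist z.val w.val with hddef
      set rA := min ‖z.val - 1‖ (d/2) with hrA
      set rB := min ‖w.val - 1‖ (d/2) with hrB
      have hbA : basept ∉ bl z.val rA := basept_not_mem_bl (min_le_left _ _)
      have hbB : basept ∉ bl w.val rB := basept_not_mem_bl (min_le_left _ _)
      refine ⟨pt n '' bl z.val rA, pt n '' bl w.val rB,
        crsOpen_pt_image (isOpen_bl _ _) hbA, crsOpen_pt_image (isOpen_bl _ _) hbB,
        ⟨z, by rw [mem_bl, dist_self]; exact lt_min hrz (by linarith), rfl⟩,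
        ⟨w, by rw [mem_bl, dist_self]; exact lt_min hrw (by linarith), rfl⟩, ?_⟩
      refine Set.disjoint_left.mpr ?_
      rintro x ⟨a, ha, rfl⟩ ⟨b, hb, hab⟩
      rcases pt_eq_iff.mp hab with ⟨-, h2⟩ | ⟨h1, -⟩
      · rw [h2] at hb
        have h1 : dist a.val z.val < d/2 := lt_of_lt_of_le ha (min_le_right _ _)
        have h2' : dist a.val w.val < d/2 := lt_of_lt_of_le hb (min_le_right _ _)
        have ht := dist_triangle z.val a.val w.val
        rw [dist_comm z.val a.val] at ht
        have hdd : d ≤ dist a.val z.val + dist a.val w.val := ht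
        linarith
      · exact hbB (h1 ▸ hb)
    · have hbA : basept ∉ bl z.val ‖z.val - 1‖ := basept_not_mem_bl le_rfl
      have hbB : basept ∉ bl w.val ‖w.val - 1‖ := basept_not_mem_bl le_rfl
      refine ⟨pt n '' bl z.val ‖z.val - 1‖, pt m '' bl w.val ‖w.val - 1‖,
        crsOpen_pt_image (isOpen_bl _ _) hbA, crsOpen_pt_image (isOpen_bl _ _) hbB,
        ⟨z, by rw [mem_bl, dist_self]; exact hrz, rfl⟩,
        ⟨w, by rw [mem_bl, dist_self]; exact hrw, rfl⟩, ?_⟩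
      refine Set.disjoint_left.mpr ?_
      rintro x ⟨a, ha, rfl⟩ ⟨b, hb, hab⟩
      rcases pt_eq_iff.mp hab with ⟨h1, -⟩ | ⟨-, h2⟩
      · exact hnm h1.symm
      · exact hbA (h2 ▸ ha)

end CrsProof

/-- the space `X_crs` is Hausdorff. -/
theorem crs_hausdorff : @T2Space X crsTop := CrsProof.crs_hausdorff'

end
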